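/- Strong AMC (version 3) implies strong AMC (version 2): if every set X is a member of a collection family, then for every set X there exist an inhabited collection family (Y_i)_{i∈I} and surjections q_i : Y_i ↠ X such that each surjection p : E ↠ Y_i is refined by a surjection q : Y_{i'} ↠ Y_i commuting with the maps to X (i.e., q_{i'} = q_i ∘ q). -/
import Mathlib


/-- A family `(Y i)_{i ∈ I}` is a collection family if every surjection onto
some member `Y i` is refined by a surjection of the form `Y i' ↠ Y i`. -/
def IsCollectionFamily {I : Type} (Y : I → Type) : Prop :=
  ∀ (i : I) (E : Type) (p : E → Y i), Function.Surjective p →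
    ∃ (i' : I) (q : Y i' → Y i), Function.Surjective q ∧
      ∃ f : Y i' → E, ∀ z, p (f z) = q z

/-- strong AMC (version 3) implies strong AMC (version 2). -/
theorem stmt_2
    (h3 : ∀ X : Type, ∃ (I : Type) (Y : I → Type),
      IsCollectionFamily Y ∧ ∃ i : I, Y i = X) :
    ∀ X : Type, ∃ (I : Type) (Y : I → Type),
      Nonempty I ∧ IsCollectionFamily Y ∧
      ∃ q : ∀ i, Y i → X,
        (∀ i, Function.Surjective (q i)) ∧
        ∀ (i : I) (E : Type) (p : E → Y i), Function.Surjective p →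
          ∃ (i' : I) (r : Y i' → Y i), Function.Surjective r ∧
            (∀ z, q i (r z) = q i' z) ∧
            ∃ f : Y i' → E, ∀ z, p (f z) = r z := by
  intro X
  obtain ⟨I, Y, hcf, i0, hi0⟩ := h3 X
  refine ⟨{j : Σ i : I, Y i → X // Function.Surjective j.2}, fun j => Y j.1.1,
    ⟨⟨⟨i0, cast hi0⟩, fun x => ⟨cast hi0.symm x, by simp⟩⟩⟩, ?_, fun j => j.1.2,
    fun j => j.2, ?_⟩
  · intro j E p hp
    obtain ⟨i', r, hr, f, hf⟩ := hcf j.1.1 E p hp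
    exact ⟨⟨⟨i', j.1.2 ∘ r⟩, j.2.comp hr⟩, r, hr, f, hf⟩
  · intro j E p hp
    obtain ⟨i', r, hr, f, hf⟩ := hcf j.1.1 E p hp
    exact ⟨⟨⟨i', j.1.2 ∘ r⟩, j.2.comp hr⟩, r, hr, fun z => rfl, f, hf⟩
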